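/- Let σ > 0, ε ≥ 0, δ ∈ ℝ, and set K = √(1 + δ²/(1+ε²)). Then the function A(x) = (2(σ+1)/(1 + K cosh(2σx/√(1+ε²))))^{1/(2σ)} is a positive solution on ℝ of the ODE (1+ε²)A'' + (A^{2σ} − 1)A + ((2σ+1)δ²/(4(1+ε²)(σ+1)²)) A^{4σ+1} = 0, with A(x) → 0 as |x| → ∞. -/

import Mathlib

theorem stmt11_key (σ s K δ ch sh : ℝ) (hσ : σ ≠ 0) (hs : s ≠ 0) (hσ1 : σ + 1 ≠ 0)
    (hd : 1 + K * ch ≠ 0)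
    (hsh : sh ^ 2 = ch ^ 2 - 1) (hK2s : K ^ 2 * s ^ 2 = s ^ 2 + δ ^ 2) :
    s ^ 2 * ((-(K * sh * (2 * σ / s) / (1 + K * ch)) * (1 / (2 * σ))) *
        (-(K * sh * (2 * σ / s) / (1 + K * ch)) * (1 / (2 * σ)))
      + (-((K * ch * (2 * σ / s) ^ 2 * (1 + K * ch) -
          (K * sh * (2 * σ / s)) * (K * sh * (2 * σ / s))) / (1 + K * ch) ^ 2) * (1 / (2 * σ))))
    + (2 * (σ + 1) / (1 + K * ch) - 1)
    + ((2 * σ + 1) * δ ^ 2 / (4 * s ^ 2 * (σ + 1) ^ 2)) * (2 * (σ + 1) / (1 + K * ch)) ^ 2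
    = 0 := by
  have hδ' : δ ^ 2 / s ^ 2 = K ^ 2 - 1 := by
    field_simp
    linarith [hK2s]
  have e1 : s ^ 2 * ((-(K * sh * (2 * σ / s) / (1 + K * ch)) * (1 / (2 * σ))) *
        (-(K * sh * (2 * σ / s) / (1 + K * ch)) * (1 / (2 * σ)))
      + (-((K * ch * (2 * σ / s) ^ 2 * (1 + K * ch) -
          (K * sh * (2 * σ / s)) * (K * sh * (2 * σ / s))) / (1 + K * ch) ^ 2) * (1 / (2 * σ))))
    + (2 * (σ + 1) / (1 + K * ch) - 1)
    + ((2 * σ + 1) * δ ^ 2 / (4 * s ^ 2 * (σ + 1) ^ 2)) * (2 * (σ + 1) / (1 + K * ch)) ^ 2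
    = ((2 * σ + 1) * K ^ 2 * sh ^ 2 - 2 * σ * (K * ch) * (1 + K * ch)
        + 2 * (σ + 1) * (1 + K * ch) - (1 + K * ch) ^ 2 + (2 * σ + 1) * (δ ^ 2 / s ^ 2))
        / (1 + K * ch) ^ 2 := by
    field_simp
    ring
  rw [e1, hδ', div_eq_zero_iff]
  left
  linear_combination (2 * σ + 1) * K ^ 2 * hsh

/-- Let `σ > 0`, `ε ≥ 0`, `δ ∈ ℝ`, `K = √(1 + δ²/(1+ε²))`. Then
`A(x) = (2(σ+1)/(1 + K cosh(2σx/√(1+ε²))))^{1/(2σ)}` is a positive solution on `ℝ` of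
`(1+ε²)A'' + (A^{2σ} − 1)A + ((2σ+1)δ²/(4(1+ε²)(σ+1)²)) A^{4σ+1} = 0`
with `A(x) → 0` as `|x| → ∞`. -/
theorem stmt11 (σ ε δ : ℝ) (hσ : 0 < σ) (hε : 0 ≤ ε)
    (K : ℝ) (hK : K = Real.sqrt (1 + δ ^ 2 / (1 + ε ^ 2)))
    (A : ℝ → ℝ)
    (hA : A = fun x => (2 * (σ + 1) /
      (1 + K * Real.cosh (2 * σ * x / Real.sqrt (1 + ε ^ 2)))) ^ (1 / (2 * σ) : ℝ)) :
    (∀ x, 0 < A x) ∧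
    (∀ x : ℝ,
      (1 + ε ^ 2) * deriv (deriv A) x + (A x ^ (2 * σ : ℝ) - 1) * A x
        + ((2 * σ + 1) * δ ^ 2 / (4 * (1 + ε ^ 2) * (σ + 1) ^ 2))
          * A x ^ (4 * σ + 1 : ℝ) = 0) ∧
    Filter.Tendsto A Filter.atTop (nhds 0) ∧
    Filter.Tendsto A Filter.atBot (nhds 0) := by
  have hse : (0:ℝ) < 1 + ε ^ 2 := by positivity
  set s : ℝ := Real.sqrt (1 + ε ^ 2) with hs_def
  have hs : 0 < s := Real.sqrt_pos.2 hse
  have hs2 : s ^ 2 = 1 + ε ^ 2 := Real.sq_sqrt hse.le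
  have hK2 : K ^ 2 = 1 + δ ^ 2 / (1 + ε ^ 2) := by
    rw [hK]; exact Real.sq_sqrt (by positivity)
  have hKnn : 0 ≤ K := hK ▸ Real.sqrt_nonneg _
  have hK1 : 1 ≤ K := by
    nlinarith [div_nonneg (sq_nonneg δ) hse.le, hK2]
  have hK0 : 0 < K := lt_of_lt_of_le one_pos hK1
  set M : ℝ := 2 * (σ + 1) with hM_def
  have hM : 0 < M := by positivity
  set p : ℝ := 1 / (2 * σ) with hp_def
  have hp : 0 < p := by positivity
  set D : ℝ → ℝ := fun x => 1 + K * Real.cosh (2 * σ * x / s) with hD_def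
  have hD2 : ∀ x, 2 ≤ D x := by
    intro x
    have h1 : 1 ≤ Real.cosh (2 * σ * x / s) := Real.one_le_cosh _
    show 2 ≤ 1 + K * Real.cosh (2 * σ * x / s)
    nlinarith
  have hDpos : ∀ x, 0 < D x := fun x => lt_of_lt_of_le (by norm_num) (hD2 x)
  have hDne : ∀ x, D x ≠ 0 := fun x => (hDpos x).ne'
  have hA' : ∀ x, A x = (M / D x) ^ p := fun x => by rw [hA]
  have hfpos : ∀ x, 0 < M / D x := fun x => div_pos hM (hDpos x)
  have hApos : ∀ x, 0 < A x := by
    intro x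
    rw [hA' x]
    exact Real.rpow_pos_of_pos (hfpos x) _
  -- inner function derivative
  have hi : ∀ x : ℝ, HasDerivAt (fun y => 2 * σ * y / s) (2 * σ / s) x := by
    intro x
    have h0 : (fun y : ℝ => 2 * σ * y / s) = fun y => (2 * σ / s) * y := by
      funext y; ring
    rw [h0]
    simpa using (hasDerivAt_id x).const_mul (2 * σ / s)
  set D' : ℝ → ℝ := fun x => K * Real.sinh (2 * σ * x / s) * (2 * σ / s) with hD'_def
  set D'' : ℝ → ℝ := fun x => K * Real.cosh (2 * σ * x / s) * (2 * σ / s) ^ 2 with hD''_def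
  have hD' : ∀ x, HasDerivAt D (D' x) x := by
    intro x
    have h1 := ((Real.hasDerivAt_cosh _).comp x (hi x)).const_mul K
    have h2 := h1.const_add 1
    refine h2.congr_deriv ?_
    simp [hD'_def]; ring
  have hD'' : ∀ x, HasDerivAt D' (D'' x) x := by
    intro x
    have h1 := (((Real.hasDerivAt_sinh _).comp x (hi x)).const_mul K).mul_const (2 * σ / s)
    refine h1.congr_deriv ?_
    simp [hD''_def]; ring
  -- A via exp
  have hAexp : A = fun x => Real.exp ((Real.log M - Real.log (D x)) * p) := by
    funext x
    rw [hA' x, Real.rpow_def_of_pos (hfpos x), Real.log_div hM.ne' (hDne x)]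
  set F1 : ℝ → ℝ := fun x => A x * (-(D' x / D x) * p) with hF1_def
  have hA1 : ∀ x, HasDerivAt A (F1 x) x := by
    intro x
    have hL : HasDerivAt (fun y => (Real.log M - Real.log (D y)) * p)
        (-(D' x / D x) * p) x := by
      exact (((hD' x).log (hDne x)).const_sub (Real.log M)).mul_const p
    have h2 := hL.exp
    have hval : F1 x = Real.exp ((Real.log M - Real.log (D x)) * p) * (-(D' x / D x) * p) := by
      simp only [hF1_def]
      rw [congrFun hAexp x]
    rw [hAexp, hval]
    exact h2
  have hA2 : ∀ x, HasDerivAt F1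
      (F1 x * (-(D' x / D x) * p) +
        A x * (-((D'' x * D x - D' x * D' x) / D x ^ 2) * p)) x := by
    intro x
    have hG : HasDerivAt (fun y => -(D' y / D y) * p)
        (-((D'' x * D x - D' x * D' x) / D x ^ 2) * p) x :=
      (((hD'' x).div (hD' x) (hDne x)).neg).mul_const p
    exact (hA1 x).mul hG
  have hderivA : deriv A = F1 := funext fun x => (hA1 x).deriv
  -- rpow identities
  have hA2σ : ∀ x, A x ^ (2 * σ : ℝ) = M / D x := by
    intro x
    rw [hA' x, ← Real.rpow_mul (hfpos x).le]
    have h1 : p * (2 * σ) = 1 := by rw [hp_def]; field_simp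
    rw [h1, Real.rpow_one]
  have hA4σ : ∀ x, A x ^ (4 * σ + 1 : ℝ) = (M / D x) ^ 2 * A x := by
    intro x
    rw [hA' x, ← Real.rpow_mul (hfpos x).le]
    have h1 : p * (4 * σ + 1) = 2 + p := by rw [hp_def]; field_simp; ring
    rw [h1, Real.rpow_add (hfpos x), Real.rpow_two]
  -- limits
  have hlim : ∀ l : Filter ℝ,
      Filter.Tendsto (fun x => Real.cosh (2 * σ * x / s)) l Filter.atTop →
      Filter.Tendsto A l (nhds 0) := by
    intro l hl
    have hDl : Filter.Tendsto D l Filter.atTop := by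
      rw [hD_def]
      exact Filter.tendsto_atTop_add_const_left _ 1 (hl.const_mul_atTop hK0)
    have hf0 : Filter.Tendsto (fun x => M / D x) l (nhds 0) :=
      Filter.Tendsto.div_atTop tendsto_const_nhds hDl
    have hcont : ContinuousAt (fun y : ℝ => y ^ p) 0 :=
      Real.continuousAt_rpow_const 0 p (Or.inr hp.le)
    have := hcont.tendsto.comp hf0
    rw [Real.zero_rpow hp.ne'] at this
    have hAeq : A = (fun y : ℝ => y ^ p) ∘ (fun x => M / D x) := by
      funext x; exact hA' x
    rw [hAeq]
    exact this
  have hcoshTop : Filter.Tendsto Real.cosh Filter.atTop Filter.atTop := by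
    have hb : ∀ x : ℝ, Real.exp x / 2 ≤ Real.cosh x := by
      intro x
      rw [Real.cosh_eq]
      nlinarith [Real.exp_pos (-x)]
    exact Filter.tendsto_atTop_mono hb (Real.tendsto_exp_atTop.atTop_div_const two_pos)
  have hcoshBot : Filter.Tendsto Real.cosh Filter.atBot Filter.atTop := by
    have h := hcoshTop.comp Filter.tendsto_neg_atBot_atTop
    have he : Real.cosh ∘ Neg.neg = Real.cosh := by
      funext y; simp [Function.comp, Real.cosh_neg]
    rwa [he] at h
  have hinnerTop : Filter.Tendsto (fun x : ℝ => 2 * σ * x / s) Filter.atTop Filter.atTop := by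
    apply Filter.Tendsto.atTop_div_const hs
    exact Filter.Tendsto.const_mul_atTop (by positivity) Filter.tendsto_id
  have hinnerBot : Filter.Tendsto (fun x : ℝ => 2 * σ * x / s) Filter.atBot Filter.atBot := by
    apply Filter.Tendsto.atBot_div_const hs
    exact Filter.Tendsto.const_mul_atBot (by positivity) Filter.tendsto_id
  refine ⟨hApos, ?_, hlim _ (hcoshTop.comp hinnerTop), hlim _ (hcoshBot.comp hinnerBot)⟩
  -- the ODE
  intro x
  rw [hderivA, (hA2 x).deriv, hA2σ x, hA4σ x]
  have key : (1 + ε ^ 2) * ((-(D' x / D x) * p) * (-(D' x / D x) * p) +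
      (-((D'' x * D x - D' x * D' x) / D x ^ 2) * p)) + (M / D x - 1)
      + ((2 * σ + 1) * δ ^ 2 / (4 * (1 + ε ^ 2) * (σ + 1) ^ 2)) * (M / D x) ^ 2 = 0 := by
    have hdne : (1 : ℝ) + K * Real.cosh (2 * σ * x / s) ≠ 0 := hDne x
    have hK2s : K ^ 2 * s ^ 2 = s ^ 2 + δ ^ 2 := by
      rw [hK2, hs2]; field_simp
    have h := stmt11_key σ s K δ (Real.cosh (2 * σ * x / s)) (Real.sinh (2 * σ * x / s))
      hσ.ne' hs.ne' (by positivity) hdne (Real.sinh_sq _) hK2s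
    rw [← hs2]
    simp only [hD_def, hD'_def, hD''_def, hM_def, hp_def]
    exact h
  have hexp : (1 + ε ^ 2) * (F1 x * (-(D' x / D x) * p) +
        A x * (-((D'' x * D x - D' x * D' x) / D x ^ 2) * p)) +
      (M / D x - 1) * A x
      + ((2 * σ + 1) * δ ^ 2 / (4 * (1 + ε ^ 2) * (σ + 1) ^ 2)) * ((M / D x) ^ 2 * A x)
      = A x * ((1 + ε ^ 2) * ((-(D' x / D x) * p) * (-(D' x / D x) * p) +
      (-((D'' x * D x - D' x * D' x) / D x ^ 2) * p)) + (M / D x - 1)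
      + ((2 * σ + 1) * δ ^ 2 / (4 * (1 + ε ^ 2) * (σ + 1) ^ 2)) * (M / D x) ^ 2) := by
    simp only [hF1_def]; ring
  rw [hexp, key, mul_zero]
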